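/- For a finite loop Q and k ≥ 1, P^k(Q) ⊆ P^{k+2}(Q). -/

import Mathlib

/-- A loop: a magma with two-sided identity in which all left and right
translations are bijections. -/
class Loop (Q : Type*) extends Mul Q, One Q where
  one_mul : ∀ a : Q, 1 * a = a
  mul_one : ∀ a : Q, a * 1 = a
  mulLeft_bijective : ∀ a : Q, Function.Bijective fun x : Q => a * x
  mulRight_bijective : ∀ a : Q, Function.Bijective fun x : Q => x * a

/-- `IsProdOf s x` means `x` can be written as a product, under some ordering
and association, whose multiset of factors is exactly `s`. -/
inductive IsProdOf {Q : Type*} [Mul Q] : Multiset Q → Q → Prop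
  | single (a : Q) : IsProdOf {a} a
  | mul {s t : Multiset Q} {a b : Q} :
      IsProdOf s a → IsProdOf t b → IsProdOf (s + t) (a * b)

/-- `fullProds Q k` is `P^k(Q)`: elements expressible as a product (in some
order and association) containing each element of `Q` exactly `k` times. -/
def fullProds (Q : Type*) [Mul Q] [Fintype Q] (k : ℕ) : Set Q :=
  {x | IsProdOf (k • (Finset.univ : Finset Q).val) x}

/-- The smallest congruence on `Q` whose quotient is a group; its class of `1`
is the associator subloop `A(Q)`, and its classes are the cosets of `A(Q)`. -/
def assocRel {Q : Type*} [Mul Q] (x y : Q) : Prop :=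
  ∀ r : Q → Q → Prop, Equivalence r →
    (∀ a b c d, r a b → r c d → r (a * c) (b * d)) →
    (∀ a b c, r ((a * b) * c) (a * (b * c))) →
    r x y

/-- The smallest congruence on `Q` whose quotient is an abelian group; its
class of `1` is the derived subloop `Q'`, and its classes are the cosets of `Q'`. -/
def commRel {Q : Type*} [Mul Q] (x y : Q) : Prop :=
  ∀ r : Q → Q → Prop, Equivalence r →
    (∀ a b c d, r a b → r c d → r (a * c) (b * d)) →
    (∀ a b c, r ((a * b) * c) (a * (b * c))) →
    (∀ a b, r (a * b) (b * a)) →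
    r x y

section Aux
variable {Q : Type*} [Loop Q]

/-- Right inverse: `a * rinv a = 1`. -/
noncomputable def rinv (a : Q) : Q :=
  (Equiv.ofBijective _ (Loop.mulLeft_bijective a)).symm 1

lemma mul_rinv (a : Q) : a * rinv a = 1 :=
  (Equiv.ofBijective _ (Loop.mulLeft_bijective a)).apply_symm_apply 1

lemma rinv_injective : Function.Injective (rinv (Q := Q)) := by
  intro a b h
  have := (Loop.mulRight_bijective (rinv a)).injective (a₁ := a) (a₂ := b)
  apply this
  rw [mul_rinv, h, mul_rinv]

lemma isProdOf_pairs (s : Multiset Q) (hs : s ≠ 0) :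
    IsProdOf (s + s.map rinv) 1 := by
  induction s using Multiset.induction with
  | empty => exact absurd rfl hs
  | cons a t ih =>
    rcases eq_or_ne t 0 with rfl | ht
    · have : (a ::ₘ (0 : Multiset Q)) + (a ::ₘ (0 : Multiset Q)).map rinv
          = ({a} : Multiset Q) + {rinv a} := by simp
      rw [this, ← mul_rinv a]
      exact IsProdOf.mul (.single a) (.single (rinv a))
    · have h1 : IsProdOf (({a} : Multiset Q) + {rinv a}) 1 := by
        rw [← mul_rinv a]; exact IsProdOf.mul (.single a) (.single (rinv a))
      have h2 := IsProdOf.mul h1 (ih ht)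
      rw [Loop.one_mul] at h2
      have heq : (a ::ₘ t) + (a ::ₘ t).map rinv
          = (({a} : Multiset Q) + {rinv a}) + (t + t.map rinv) := by
        simp only [Multiset.map_cons, Multiset.map_add, Multiset.map_singleton,
          ← Multiset.singleton_add]
        abel
      rw [heq]
      exact h2

end Aux

theorem fullProds_subset_fullProds_add_two (Q : Type*) [Loop Q] [Fintype Q]
    (k : ℕ) (hk : 1 ≤ k) :
    fullProds Q k ⊆ fullProds Q (k + 2) := by
  intro x hx
  have hQ : Nonempty Q := ⟨1⟩
  have hrb : Function.Bijective (rinv (Q := Q)) :=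
    Finite.injective_iff_bijective.mp rinv_injective
  have hmap : (Finset.univ : Finset Q).val.map rinv = (Finset.univ : Finset Q).val := by
    exact Multiset.map_univ_val_equiv (Equiv.ofBijective _ hrb)
  have hne : (Finset.univ : Finset Q).val ≠ 0 := by
    simp [Multiset.eq_zero_iff_forall_notMem]
  have h1 : IsProdOf ((Finset.univ : Finset Q).val + (Finset.univ : Finset Q).val.map rinv) 1 :=
    isProdOf_pairs _ hne
  have h2 := IsProdOf.mul hx h1
  rw [Loop.mul_one] at h2
  have heq : (k + 2) • (Finset.univ : Finset Q).val
      = k • (Finset.univ : Finset Q).val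
        + ((Finset.univ : Finset Q).val + (Finset.univ : Finset Q).val.map rinv) := by
    rw [hmap, add_smul, two_smul]
  rw [fullProds, Set.mem_setOf_eq, heq]
  exact h2
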